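/- Let v ∈ S_n^+ be partitioned into blocks with v_{11} of rank l > 0 and reduced eigen-decomposition v_{11} = u_0 λ_0 u_0'. Define ψ_{i1} = v_{i1} u_0 λ_0^{-1/2}, φ = v_{22} − ψ_{21}ψ_{21}', ψ = [[ψ_{11},0],[ψ_{21},I_{n_2}]]. If X is an R^n-valued Gaussian random vector with distribution N(μ,v) and Ξ = (ψ'ψ)^{-1}ψ'(X−μ), then E‖X − μ − ψΞ‖² = 0 and Ξ has distribution N(0, diag(I_l, φ)). -/

import Mathlib

open MeasureTheory ProbabilityTheory Matrix

noncomputable section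

/-- A measure `ν` on `ι → ℝ` is the multivariate Gaussian `N(m, v)` iff every
linear functional pushes it forward to the corresponding one-dimensional Gaussian. -/
def IsGaussianVec {ι : Type*} [Fintype ι] (ν : Measure (ι → ℝ))
    (m : ι → ℝ) (v : Matrix ι ι ℝ) : Prop :=
  ∀ l : ι → ℝ,
    ν.map (fun x => ∑ i, l i * x i) =
      gaussianReal (∑ i, l i * m i)
        (Real.toNNReal (∑ i, ∑ j, l i * v i j * l j))

end

section Aux


lemma psd_block_ker {n1 n2 : ℕ} {v : Matrix (Fin n1 ⊕ Fin n2) (Fin n1 ⊕ Fin n2) ℝ}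
    (hv : v.PosSemidef) (x : Fin n1 → ℝ) (hx : v.toBlocks₁₁ *ᵥ x = 0) :
    v.toBlocks₂₁ *ᵥ x = 0 := by
  set y := v.toBlocks₂₁ *ᵥ x with hy
  rw [← dotProduct_self_eq_zero (v := y)]
  have hsym : v.toBlocks₁₂ = v.toBlocks₂₁ᵀ := by
    have := hv.1
    rw [Matrix.IsHermitian, conjTranspose_eq_transpose_of_trivial] at this
    ext i j
    have := congrFun (congrFun this (Sum.inl i)) (Sum.inr j)
    simpa [Matrix.transpose_apply, Matrix.toBlocks₁₂, Matrix.toBlocks₂₁] using this.symm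
  have hveq : v = Matrix.fromBlocks v.toBlocks₁₁ v.toBlocks₁₂ v.toBlocks₂₁ v.toBlocks₂₂ :=
    (Matrix.fromBlocks_toBlocks v).symm
  have key : ∀ t : ℝ, 0 ≤ -2 * t * (y ⬝ᵥ y) + t ^ 2 * (y ⬝ᵥ v.toBlocks₂₂ *ᵥ y) := by
    intro t
    have h := hv.dotProduct_mulVec_nonneg (Sum.elim x (-t • y))
    rw [star_trivial] at h
    nth_rewrite 1 [hveq] at h
    rw [Matrix.fromBlocks_mulVec, Sum.elim_comp_inl, Sum.elim_comp_inr,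
      sumElim_dotProduct_sumElim, hx, hsym] at h
    simp only [Matrix.mulVec_smul, dotProduct_add, dotProduct_smul,
      smul_dotProduct, Matrix.dotProduct_mulVec, Matrix.vecMul_transpose, ← hy,
      smul_eq_mul, dotProduct_zero, zero_dotProduct, zero_add, add_zero] at h
    rw [← Matrix.dotProduct_mulVec] at h
    simp only [smul_dotProduct, smul_eq_mul] at h
    ring_nf at h ⊢
    linarith [h]
  have ha : 0 ≤ y ⬝ᵥ y := Finset.sum_nonneg fun i _ => mul_self_nonneg _
  have hc : 0 ≤ y ⬝ᵥ v.toBlocks₂₂ *ᵥ y := by nlinarith [key 1]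
  rcases eq_or_lt_of_le hc with hc0 | hc0
  · nlinarith [key 1]
  · have hk := key ((y ⬝ᵥ y) / (y ⬝ᵥ v.toBlocks₂₂ *ᵥ y))
    set a := y ⬝ᵥ y
    set c := y ⬝ᵥ v.toBlocks₂₂ *ᵥ y
    rw [div_pow] at hk
    have h1 : -2 * (a / c) * a + a ^ 2 / c ^ 2 * c = -a ^ 2 / c := by
      field_simp; ring
    rw [h1] at hk
    have h3 : 0 ≤ -a ^ 2 := by
      have := mul_nonneg hk hc0.le
      rwa [div_mul_cancel₀ _ (ne_of_gt hc0)] at this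
    nlinarith [sq_nonneg a]


lemma quad_form_eq {k : Type*} [Fintype k] (A : Matrix k k ℝ) (u : k → ℝ) :
    ∑ i, ∑ j, u i * A i j * u j = u ⬝ᵥ A *ᵥ u := by
  simp [dotProduct, Matrix.mulVec, Finset.mul_sum, mul_assoc]

lemma ae_eq_of_map_dirac {Ω : Type*} [MeasurableSpace Ω] (μ : Measure Ω) (g : Ω → ℝ)
    (hg : Measurable g) (c : ℝ) (h : μ.map g = Measure.dirac c) :
    ∀ᵐ ω ∂μ, g ω = c := by
  have h0 : μ.map g {c}ᶜ = 0 := by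
    rw [h, Measure.dirac_apply' _ (measurableSet_singleton c).compl]
    simp
  rw [Measure.map_apply hg (measurableSet_singleton c).compl] at h0
  rw [ae_iff]
  convert h0 using 2
  rfl

section Alg
variable {n1 n2 l : ℕ}
  (v : Matrix (Fin n1 ⊕ Fin n2) (Fin n1 ⊕ Fin n2) ℝ)
  (u0 : Matrix (Fin n1) (Fin l) ℝ) (d0 : Fin l → ℝ)

lemma psd_block_symm (hv : v.PosSemidef) : v.toBlocks₁₂ = v.toBlocks₂₁ᵀ := by
  have := hv.1
  rw [Matrix.IsHermitian, conjTranspose_eq_transpose_of_trivial] at this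
  ext i j
  have := congrFun (congrFun this (Sum.inl i)) (Sum.inr j)
  simpa [Matrix.transpose_apply, Matrix.toBlocks₁₂, Matrix.toBlocks₂₁] using this.symm

lemma alg_main (hv : v.PosSemidef)
    (hd0 : ∀ i, 0 < d0 i) (hu0 : u0ᵀ * u0 = 1)
    (hv11 : v.toBlocks₁₁ = u0 * Matrix.diagonal d0 * u0ᵀ)
    (hker : ∀ x : Fin n1 → ℝ, v.toBlocks₁₁ *ᵥ x = 0 → v.toBlocks₂₁ *ᵥ x = 0)
    (lih : Matrix (Fin l) (Fin l) ℝ)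
    (ψ11 : Matrix (Fin n1) (Fin l) ℝ) (ψ21 : Matrix (Fin n2) (Fin l) ℝ)
    (φ : Matrix (Fin n2) (Fin n2) ℝ)
    (ψ : Matrix (Fin n1 ⊕ Fin n2) (Fin l ⊕ Fin n2) ℝ)
    (Sg : Matrix (Fin l ⊕ Fin n2) (Fin l ⊕ Fin n2) ℝ)
    (hlih : lih = Matrix.diagonal fun i => (Real.sqrt (d0 i))⁻¹)
    (e11 : ψ11 = v.toBlocks₁₁ * u0 * lih) (e21 : ψ21 = v.toBlocks₂₁ * u0 * lih)
    (eφ : φ = v.toBlocks₂₂ - ψ21 * ψ21ᵀ)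
    (eψ : ψ = Matrix.fromBlocks ψ11 0 ψ21 1)
    (eSg : Sg = Matrix.fromBlocks 1 0 0 φ) :
    ψ * Sg * ψᵀ = v ∧ (ψᵀ * ψ) * (ψᵀ * ψ)⁻¹ = 1 ∧ (ψᵀ * ψ)⁻¹ * (ψᵀ * ψ) = 1 := by
  set D := Matrix.diagonal d0 with hD
  set S := Matrix.diagonal (fun i => Real.sqrt (d0 i)) with hS
  set Dinv := Matrix.diagonal (fun i => (d0 i)⁻¹) with hDinvdef
  have diag_eq : ∀ (f g : Fin l → ℝ), (∀ i, f i = g i) →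
      Matrix.diagonal f = Matrix.diagonal g := fun f g h => by rw [funext h]
  have hsqrt_ne : ∀ i, Real.sqrt (d0 i) ≠ 0 := fun i =>
    ne_of_gt (Real.sqrt_pos.mpr (hd0 i))
  have hSlih : S * lih = 1 := by
    rw [hS, hlih, Matrix.diagonal_mul_diagonal, ← Matrix.diagonal_one]
    exact diag_eq _ _ fun i => mul_inv_cancel₀ (hsqrt_ne i)
  have hlihS : lih * S = 1 := by
    rw [hS, hlih, Matrix.diagonal_mul_diagonal, ← Matrix.diagonal_one]
    exact diag_eq _ _ fun i => inv_mul_cancel₀ (hsqrt_ne i)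
  have hSS : S * S = D := by
    rw [hS, hD, Matrix.diagonal_mul_diagonal]
    exact diag_eq _ _ fun i => Real.mul_self_sqrt (hd0 i).le
  have hDDinv : D * Dinv = 1 := by
    rw [hD, hDinvdef, Matrix.diagonal_mul_diagonal, ← Matrix.diagonal_one]
    exact diag_eq _ _ fun i => mul_inv_cancel₀ (ne_of_gt (hd0 i))
  -- assoc-friendly cancellation lemmas
  have hu0c : ∀ {m : Type} (A : Matrix (Fin l) m ℝ), u0ᵀ * (u0 * A) = A := fun A => by
    rw [← Matrix.mul_assoc, hu0, Matrix.one_mul]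
  have hSlihc : ∀ {m : Type} (A : Matrix (Fin l) m ℝ), S * (lih * A) = A := fun A => by
    rw [← Matrix.mul_assoc, hSlih, Matrix.one_mul]
  have hlihSc : ∀ {m : Type} (A : Matrix (Fin l) m ℝ), lih * (S * A) = A := fun A => by
    rw [← Matrix.mul_assoc, hlihS, Matrix.one_mul]
  have hSSc : ∀ {m : Type} (A : Matrix (Fin l) m ℝ), S * (S * A) = D * A := fun A => by
    rw [← Matrix.mul_assoc, hSS]
  have hDc : ∀ {m : Type} (A : Matrix (Fin l) m ℝ), D * (Dinv * A) = A := fun A => by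
    rw [← Matrix.mul_assoc, hDDinv, Matrix.one_mul]
  have hψ11 : ψ11 = u0 * S := by
    rw [e11, hv11]
    simp only [Matrix.mul_assoc]
    rw [hu0c, ← hSS, Matrix.mul_assoc S, hSlih, Matrix.mul_one]
  have hsym : v.toBlocks₁₂ = v.toBlocks₂₁ᵀ := psd_block_symm v hv
  have hv11K : v.toBlocks₁₁ * (1 - u0 * u0ᵀ) = 0 := by
    rw [Matrix.mul_sub, Matrix.mul_one, hv11]
    simp only [Matrix.mul_assoc]
    rw [hu0c, sub_self]
  have hv21u : v.toBlocks₂₁ * (u0 * u0ᵀ) = v.toBlocks₂₁ := by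
    have h0 : v.toBlocks₂₁ * (1 - u0 * u0ᵀ) = 0 := by
      ext i j
      have hx : v.toBlocks₁₁ *ᵥ (fun k => ((1 - u0 * u0ᵀ : Matrix (Fin n1) (Fin n1) ℝ)) k j) = 0 := by
        ext i'
        have := congrFun (congrFun hv11K i') j
        simpa [Matrix.mul_apply, Matrix.mulVec, dotProduct] using this
      have := congrFun (hker _ hx) i
      simpa [Matrix.mul_apply, Matrix.mulVec, dotProduct] using this
    have h1 : v.toBlocks₂₁ * (1 : Matrix (Fin n1) (Fin n1) ℝ) - v.toBlocks₂₁ * (u0 * u0ᵀ) = 0 := by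
      rw [← Matrix.mul_sub]; exact h0
    rw [Matrix.mul_one, sub_eq_zero] at h1; exact h1.symm
  have hv12u : u0 * (u0ᵀ * v.toBlocks₁₂) = v.toBlocks₁₂ := by
    rw [hsym, ← Matrix.transpose_transpose u0, ← Matrix.transpose_mul, ← Matrix.transpose_mul]
    rw [Matrix.transpose_transpose, Matrix.mul_assoc, hv21u]
  have hψ11T : ψ11ᵀ = S * u0ᵀ := by
    rw [hψ11, Matrix.transpose_mul, hS, Matrix.diagonal_transpose]
  have hψ21T : ψ21ᵀ = lih * (u0ᵀ * v.toBlocks₁₂) := by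
    rw [e21, Matrix.transpose_mul, Matrix.transpose_mul, hlih, Matrix.diagonal_transpose,
      ← hlih, ← hsym]
  have p1 : ψ11 * ψ11ᵀ = v.toBlocks₁₁ := by
    rw [hψ11T, hψ11, hv11]
    simp only [Matrix.mul_assoc]
    rw [hSSc]
  have p2 : ψ11 * ψ21ᵀ = v.toBlocks₁₂ := by
    rw [hψ21T, hψ11]
    simp only [Matrix.mul_assoc]
    rw [hSlihc, hv12u]
  have p3 : ψ21 * ψ11ᵀ = v.toBlocks₂₁ := by
    rw [hψ11T, e21]
    simp only [Matrix.mul_assoc]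
    rw [hlihSc, hv21u]
  have pD : ψ11ᵀ * ψ11 = D := by
    rw [hψ11T, hψ11]
    simp only [Matrix.mul_assoc]
    rw [hu0c, hSS]
  have hfact : ψ * Sg * ψᵀ = v := by
    rw [eψ, eSg, Matrix.fromBlocks_transpose, Matrix.fromBlocks_multiply,
      Matrix.fromBlocks_multiply]
    simp only [Matrix.mul_zero, Matrix.zero_mul, Matrix.mul_one, Matrix.one_mul,
      Matrix.transpose_zero, Matrix.transpose_one, add_zero, zero_add]
    rw [p1, p2, p3, eφ, add_sub_cancel]
    exact Matrix.fromBlocks_toBlocks v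
  have hG : ψᵀ * ψ = Matrix.fromBlocks (D + ψ21ᵀ * ψ21) ψ21ᵀ ψ21 1 := by
    rw [eψ, Matrix.fromBlocks_transpose, Matrix.fromBlocks_multiply]
    simp only [Matrix.transpose_zero, Matrix.transpose_one, Matrix.mul_zero, Matrix.zero_mul,
      Matrix.mul_one, Matrix.one_mul, add_zero, zero_add]
    rw [pD]
  have hGright : (ψᵀ * ψ) *
      Matrix.fromBlocks Dinv (-(Dinv * ψ21ᵀ)) (-(ψ21 * Dinv)) (1 + ψ21 * Dinv * ψ21ᵀ) = 1 := by
    rw [hG, Matrix.fromBlocks_multiply, ← Matrix.fromBlocks_one, Matrix.ext_iff_blocks]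
    simp only [Matrix.toBlocks_fromBlocks₁₁, Matrix.toBlocks_fromBlocks₁₂,
      Matrix.toBlocks_fromBlocks₂₁, Matrix.toBlocks_fromBlocks₂₂]
    refine ⟨?_, ?_, ?_, ?_⟩
    · rw [Matrix.add_mul, hDDinv, Matrix.mul_neg, Matrix.mul_assoc ψ21ᵀ]
      abel
    · simp only [Matrix.mul_add, Matrix.add_mul, Matrix.mul_neg, Matrix.neg_mul,
        Matrix.mul_one, Matrix.one_mul, Matrix.mul_assoc]
      rw [hDc]
      abel
    · simp only [Matrix.mul_neg, Matrix.one_mul]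
      abel
    · simp only [Matrix.mul_neg, Matrix.one_mul, Matrix.mul_assoc]
      abel
  have hGi : (ψᵀ * ψ)⁻¹ =
      Matrix.fromBlocks Dinv (-(Dinv * ψ21ᵀ)) (-(ψ21 * Dinv)) (1 + ψ21 * Dinv * ψ21ᵀ) :=
    Matrix.inv_eq_right_inv hGright
  exact ⟨hfact, by rw [hGi]; exact hGright, by rw [hGi]; exact mul_eq_one_comm.mp hGright⟩
end Alg


end Aux

/-- Factorization of the initial condition: with `v₁₁ = u₀ λ₀ u₀ᵀ` the reduced
eigen-decomposition (rank `l`), `ψᵢ₁ = vᵢ₁ u₀ λ₀^{-1/2}`, `φ = v₂₂ − ψ₂₁ψ₂₁ᵀ`,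
`ψ = [[ψ₁₁,0],[ψ₂₁,I]]`, if `X ∼ N(μ, v)` and `Ξ = (ψᵀψ)⁻¹ψᵀ(X−μ)` then
`E‖X − μ − ψΞ‖² = 0` and `Ξ ∼ N(0, diag(I_l, φ))`. -/
theorem gaussian_initial_factorization
    {n1 n2 l : ℕ} (hl : 0 < l)
    {Ω : Type*} [MeasurableSpace Ω] (μ : Measure Ω) [IsProbabilityMeasure μ]
    (X : Ω → (Fin n1 ⊕ Fin n2 → ℝ)) (hX : Measurable X)
    (μv : Fin n1 ⊕ Fin n2 → ℝ) (v : Matrix (Fin n1 ⊕ Fin n2) (Fin n1 ⊕ Fin n2) ℝ)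
    (hv : v.PosSemidef) (hlaw : IsGaussianVec (μ.map X) μv v)
    (u0 : Matrix (Fin n1) (Fin l) ℝ) (d0 : Fin l → ℝ)
    (hd0 : ∀ i, 0 < d0 i) (hu0 : u0ᵀ * u0 = 1)
    (hv11 : v.toBlocks₁₁ = u0 * Matrix.diagonal d0 * u0ᵀ)
    (hrank : (v.toBlocks₁₁).rank = l) :
    letI lih : Matrix (Fin l) (Fin l) ℝ := Matrix.diagonal fun i => (Real.sqrt (d0 i))⁻¹
    letI ψ11 := v.toBlocks₁₁ * u0 * lih
    letI ψ21 := v.toBlocks₂₁ * u0 * lih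
    letI φ := v.toBlocks₂₂ - ψ21 * ψ21ᵀ
    letI ψ : Matrix (Fin n1 ⊕ Fin n2) (Fin l ⊕ Fin n2) ℝ := Matrix.fromBlocks ψ11 0 ψ21 1
    letI Ξ : Ω → (Fin l ⊕ Fin n2 → ℝ) :=
      fun ω => (ψᵀ * ψ)⁻¹ *ᵥ (ψᵀ *ᵥ (X ω - μv))
    (∫ ω, (∑ i, (X ω i - μv i - (ψ *ᵥ Ξ ω) i) ^ 2) ∂μ) = 0 ∧
      IsGaussianVec (μ.map Ξ) 0 (Matrix.fromBlocks 1 0 0 φ) := by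
  set lih : Matrix (Fin l) (Fin l) ℝ := Matrix.diagonal fun i => (Real.sqrt (d0 i))⁻¹ with hlih
  set ψ11 := v.toBlocks₁₁ * u0 * lih with e11
  set ψ21 := v.toBlocks₂₁ * u0 * lih with e21
  set φ := v.toBlocks₂₂ - ψ21 * ψ21ᵀ with eφ
  set ψ : Matrix (Fin n1 ⊕ Fin n2) (Fin l ⊕ Fin n2) ℝ := Matrix.fromBlocks ψ11 0 ψ21 1 with eψ
  set Ξ : Ω → (Fin l ⊕ Fin n2 → ℝ) :=
      fun ω => (ψᵀ * ψ)⁻¹ *ᵥ (ψᵀ *ᵥ (X ω - μv)) with eΞ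
  set Sg : Matrix (Fin l ⊕ Fin n2) (Fin l ⊕ Fin n2) ℝ := Matrix.fromBlocks 1 0 0 φ with eSg
  have hker : ∀ x : Fin n1 → ℝ, v.toBlocks₁₁ *ᵥ x = 0 → v.toBlocks₂₁ *ᵥ x = 0 :=
    fun x hx => psd_block_ker hv x hx
  obtain ⟨hfact, hGG, hGiG⟩ :=
    alg_main v u0 d0 hv hd0 hu0 hv11 hker lih ψ11 ψ21 φ ψ Sg hlih e11 e21 eφ eψ eSg
  set Mm : Matrix (Fin l ⊕ Fin n2) (Fin n1 ⊕ Fin n2) ℝ := (ψᵀ * ψ)⁻¹ * ψᵀ with eMm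
  have hGsym : ((ψᵀ * ψ)⁻¹)ᵀ = (ψᵀ * ψ)⁻¹ := by
    rw [Matrix.transpose_nonsing_inv, Matrix.transpose_mul, Matrix.transpose_transpose]
  have hMv : Mm * v = Sg * ψᵀ := by
    conv_lhs => rw [← hfact]
    rw [eMm]
    simp only [Matrix.mul_assoc]
    rw [← Matrix.mul_assoc ψᵀ ψ, ← Matrix.mul_assoc _ (ψᵀ * ψ), hGiG, Matrix.one_mul]
  have hψMv : ψ * (Mm * v) = v := by
    rw [hMv, ← Matrix.mul_assoc, hfact]
  have hMvMT : Mm * v * Mmᵀ = Sg := by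
    rw [hMv, eMm, Matrix.transpose_mul, Matrix.transpose_transpose, hGsym]
    simp only [Matrix.mul_assoc]
    rw [← Matrix.mul_assoc ψᵀ ψ, hGG, Matrix.mul_one]
  set R : Matrix (Fin n1 ⊕ Fin n2) (Fin n1 ⊕ Fin n2) ℝ := 1 - ψ * Mm with eR
  have hRv : R * v = 0 := by
    rw [eR, Matrix.sub_mul, Matrix.one_mul, Matrix.mul_assoc, hψMv, sub_self]
  have hRvR : R * v * Rᵀ = 0 := by rw [hRv, Matrix.zero_mul]
  -- measurability
  have hΞbody : Ξ = fun ω => Mm *ᵥ (X ω - μv) := by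
    funext ω; exact Matrix.mulVec_mulVec _ _ _
  have hΞm : Measurable Ξ := by
    rw [hΞbody]
    apply measurable_pi_lambda
    intro i
    show Measurable fun ω => ∑ j, Mm i j * (X ω j - μv j)
    exact Finset.measurable_sum _ fun j _ =>
      (((measurable_pi_apply j).comp hX).sub_const _).const_mul _
  constructor
  · -- Part 1
    have hae : ∀ᵐ ω ∂μ, ∀ i, ∑ j, R i j * X ω j = ∑ j, R i j * μv j := by
      rw [ae_all_iff]
      intro i
      have hfm : Measurable fun x : Fin n1 ⊕ Fin n2 → ℝ => ∑ j, R i j * x j :=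
        Finset.measurable_sum _ fun j _ => (measurable_pi_apply j).const_mul _
      have h1 := hlaw (fun j => R i j)
      have hvar : (∑ j, ∑ k, R i j * v j k * R i k) = 0 := by
        have : (∑ j, ∑ k, R i j * v j k * R i k) = (R * v * Rᵀ) i i := by
          simp only [Matrix.mul_apply, Matrix.transpose_apply, Finset.sum_mul]
          exact Finset.sum_comm
        rw [this, hRvR, Matrix.zero_apply]
      rw [hvar, Real.toNNReal_zero, gaussianReal_zero_var, Measure.map_map hfm hX] at h1
      have := ae_eq_of_map_dirac μ _ (hfm.comp hX) _ h1
      simpa [Function.comp] using this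
    have hzero : (fun ω => ∑ i, (X ω i - μv i - (ψ *ᵥ Ξ ω) i) ^ 2) =ᵐ[μ]
        (fun _ => (0:ℝ)) := by
      filter_upwards [hae] with ω hω
      have hterm : ∀ i, X ω i - μv i - (ψ *ᵥ Ξ ω) i = 0 := by
        intro i
        have h2 : (ψ *ᵥ Ξ ω) = (ψ * Mm) *ᵥ (X ω - μv) := by
          rw [hΞbody, Matrix.mulVec_mulVec]
        have h3 : ((ψ * Mm) *ᵥ (X ω - μv)) i = ∑ j, (ψ * Mm) i j * (X ω j - μv j) := rfl
        have h4 : X ω i - μv i = ∑ j, (1 : Matrix (Fin n1 ⊕ Fin n2) (Fin n1 ⊕ Fin n2) ℝ) i j * (X ω j - μv j) := by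
          rw [Finset.sum_eq_single i]
          · simp
          · intro b _ hb; simp [Matrix.one_apply_ne' hb]
          · intro hi; exact absurd (Finset.mem_univ i) hi
        rw [h2, h3, h4, ← Finset.sum_sub_distrib]
        have h5 : ∀ j, (1 : Matrix (Fin n1 ⊕ Fin n2) (Fin n1 ⊕ Fin n2) ℝ) i j * (X ω j - μv j)
            - (ψ * Mm) i j * (X ω j - μv j) = R i j * (X ω j - μv j) := by
          intro j
          rw [eR]; simp [Matrix.sub_apply, sub_mul]
        rw [Finset.sum_congr rfl fun j _ => h5 j]
        have := hω i
        simp only [mul_sub] at *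
        rw [Finset.sum_sub_distrib, this, sub_self]
      rw [Finset.sum_congr rfl fun i _ => by rw [hterm i]]
      simp
    rw [integral_congr_ae hzero]
    simp
  · -- Part 2
    intro lv
    set l' : Fin n1 ⊕ Fin n2 → ℝ := fun j => ∑ i, lv i * Mm i j with hl'
    set c : ℝ := ∑ j, l' j * μv j with hc
    have hfl : Measurable fun x : Fin l ⊕ Fin n2 → ℝ => ∑ i, lv i * x i :=
      Finset.measurable_sum _ fun i _ => (measurable_pi_apply i).const_mul _
    have hfl' : Measurable fun x : Fin n1 ⊕ Fin n2 → ℝ => ∑ j, l' j * x j :=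
      Finset.measurable_sum _ fun j _ => (measurable_pi_apply j).const_mul _
    have haddc : Measurable fun y : ℝ => y + (-c) := measurable_id.add_const _
    rw [Measure.map_map hfl hΞm]
    have hcomp : (fun x : Fin l ⊕ Fin n2 → ℝ => ∑ i, lv i * x i) ∘ Ξ =
        (fun y => y + (-c)) ∘ ((fun x : Fin n1 ⊕ Fin n2 → ℝ => ∑ j, l' j * x j) ∘ X) := by
      funext ω
      simp only [Function.comp_apply]
      rw [hΞbody]
      have : ∑ i, lv i * (Mm *ᵥ (X ω - μv)) i = lv ⬝ᵥ Mm *ᵥ (X ω - μv) := rfl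
      rw [this, Matrix.dotProduct_mulVec]
      have h6 : (lv ᵥ* Mm) ⬝ᵥ (X ω - μv) = ∑ j, l' j * (X ω j - μv j) := by
        simp [Matrix.vecMul, dotProduct, hl']
      rw [h6]
      simp only [mul_sub]
      rw [Finset.sum_sub_distrib, hc, sub_eq_add_neg]
    rw [hcomp, ← Measure.map_map haddc (hfl'.comp hX), ← Measure.map_map hfl' hX,
      hlaw l', gaussianReal_map_add_const, add_neg_cancel]
    have hmean : (∑ i, lv i * (0 : Fin l ⊕ Fin n2 → ℝ) i) = 0 := by simp
    have hvareq : (∑ j, ∑ k, l' j * v j k * l' k) = ∑ i, ∑ j, lv i * Sg i j * lv j := by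
      rw [quad_form_eq, quad_form_eq, ← hMvMT]
      have hlM : l' = lv ᵥ* Mm := by
        funext j; simp [Matrix.vecMul, dotProduct, hl']
      rw [hlM, Matrix.dotProduct_mulVec, Matrix.vecMul_vecMul,
        ← Matrix.mulVec_transpose Mm lv, ← Matrix.dotProduct_mulVec, Matrix.mulVec_mulVec]
    rw [hmean, hvareq]
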